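/- A sequence (s_k)_{k≥0} of real numbers satisfies: for every polynomial P(x)=∑ a_k x^k nonnegative on ℝ we have ∑ a_k s_k ≥ 0, if and only if for every m ≥ 0 the Hankel quadratic form ∑_{i,j=0}^m s_{i+j} ξ_i ξ_j is positive semidefinite. -/

import Mathlib

open Finset

section Aux
open Polynomial
lemma nonneg_of_nonneg_off (Q : Polynomial ℝ) (r : ℝ) (h : ∀ x ≠ r, 0 ≤ Q.eval x) :
    ∀ x, 0 ≤ Q.eval x := by
  intro x
  by_cases hx : x = r
  · subst hx
    have hc : Filter.Tendsto (fun y => Q.eval y) (nhdsWithin x {x}ᶜ) (nhds (Q.eval x)) :=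
      ((Polynomial.continuous Q).continuousAt).tendsto.mono_left nhdsWithin_le_nhds
    exact ge_of_tendsto hc (eventually_nhdsWithin_of_forall fun y hy => h y hy)
  · exact h x hx

/-- Every real polynomial nonnegative on `ℝ` is a sum of two squares. -/
theorem sos_of_nonneg (P : Polynomial ℝ) (h : ∀ x : ℝ, 0 ≤ P.eval x) :
    ∃ A B : Polynomial ℝ, P = A ^ 2 + B ^ 2 := by
  suffices H : ∀ n : ℕ, ∀ P : Polynomial ℝ, (∀ x : ℝ, 0 ≤ P.eval x) → P.natDegree = n →
      ∃ A B : Polynomial ℝ, P = A ^ 2 + B ^ 2 from H P.natDegree P h rfl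
  intro n
  induction n using Nat.strong_induction_on with
  | _ n ih =>
  intro P h hn
  rcases Nat.eq_zero_or_pos n with h0 | hpos
  · subst h0
    have hP : P = C (P.coeff 0) := Polynomial.eq_C_of_natDegree_eq_zero hn
    have hc : 0 ≤ P.coeff 0 := by
      have := h 0; rw [hP] at this; simpa using this
    refine ⟨C (Real.sqrt (P.coeff 0)), 0, ?_⟩
    rw [← C_pow, sq, Real.mul_self_sqrt hc, ← hP]; ring
  · have hPne : P ≠ 0 := fun hP0 => by simp [hP0] at hn; omega
    have hdeg : 0 < P.degree := by
      rw [← Polynomial.natDegree_pos_iff_degree_pos]; omega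
    obtain ⟨z, hz⟩ : ∃ z : ℂ, aeval z P = 0 := by
      obtain ⟨z, hz⟩ := Complex.exists_root (f := P.map (algebraMap ℝ ℂ))
        (by rwa [Polynomial.degree_map])
      exact ⟨z, by rw [Polynomial.aeval_def, Polynomial.eval₂_eq_eval_map]; exact hz⟩
    by_cases him : z.im = 0
    · -- real root, even multiplicity
      set r := z.re with hr
      have hroot : P.eval r = 0 := by
        have hzr : z = algebraMap ℝ ℂ r := by rw [Complex.ext_iff]; simp [him, hr]
        rw [hzr, Polynomial.aeval_algebraMap_apply_eq_algebraMap_eval] at hz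
        have : ((P.eval r : ℝ) : ℂ) = 0 := by rw [← hz]; simp [Polynomial.aeval_def]
        exact_mod_cast this
      have hderiv : P.derivative.eval r = 0 := by
        have hmin : IsLocalMin (fun x => P.eval x) r :=
          Filter.Eventually.of_forall (fun x => by
            show P.eval r ≤ P.eval x
            rw [hroot]; exact h x)
        have := hmin.deriv_eq_zero
        rwa [Polynomial.deriv] at this
      obtain ⟨Q₁, hQ₁⟩ : (X - C r) ∣ P := Polynomial.dvd_iff_isRoot.mpr hroot
      have hQ₁r : Q₁.eval r = 0 := by
        have hd : P.derivative = Q₁ + (X - C r) * Q₁.derivative := by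
          rw [hQ₁, Polynomial.derivative_mul]; simp
        have := hderiv
        rw [hd] at this
        simpa using this
      obtain ⟨Q, hQ⟩ : (X - C r) ∣ Q₁ := Polynomial.dvd_iff_isRoot.mpr hQ₁r
      have hPQ : P = (X - C r) ^ 2 * Q := by rw [hQ₁, hQ]; ring
      have hQne : Q ≠ 0 := by
        intro h0; rw [h0, mul_zero] at hPQ; exact hPne hPQ
      have hndeg : Q.natDegree = n - 2 ∧ 2 ≤ n := by
        have h2 : ((X - C r) ^ 2 : Polynomial ℝ).natDegree = 2 := by
          simp [Polynomial.natDegree_pow]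
        have := Polynomial.natDegree_mul (p := (X - C r) ^ 2) (q := Q)
          (pow_ne_zero 2 (Polynomial.X_sub_C_ne_zero r)) hQne
        rw [← hPQ, hn, h2] at this
        omega
      have hQnn : ∀ x, 0 ≤ Q.eval x := by
        apply nonneg_of_nonneg_off Q r
        intro x hx
        have hPx := h x
        rw [hPQ] at hPx
        simp only [Polynomial.eval_mul, Polynomial.eval_pow, Polynomial.eval_sub,
          Polynomial.eval_X, Polynomial.eval_C] at hPx
        have hpos : 0 < (x - r) ^ 2 := pow_two_pos_of_ne_zero (sub_ne_zero.mpr hx)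
        exact (mul_nonneg_iff_of_pos_left hpos).mp hPx
      obtain ⟨A, B, hAB⟩ := ih (n - 2) (by omega) Q hQnn hndeg.1
      exact ⟨(X - C r) * A, (X - C r) * B, by rw [hPQ, hAB]; ring⟩
    · -- non-real root
      have hq : (X ^ 2 - C (2 * z.re) * X + C (‖z‖ ^ 2) : Polynomial ℝ) ∣ P :=
        P.quadratic_dvd_of_aeval_eq_zero_im_ne_zero hz him
      obtain ⟨Q, hPQ⟩ := hq
      set q : Polynomial ℝ := X ^ 2 - C (2 * z.re) * X + C (‖z‖ ^ 2) with hqdef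
      have hnormsq : ‖z‖ ^ 2 = z.re ^ 2 + z.im ^ 2 := by
        rw [Complex.sq_norm, Complex.normSq_apply]; ring
      have hqeval : ∀ x, q.eval x = (x - z.re) ^ 2 + z.im ^ 2 := by
        intro x
        simp only [hqdef, Polynomial.eval_add, Polynomial.eval_sub, Polynomial.eval_pow,
          Polynomial.eval_mul, Polynomial.eval_X, Polynomial.eval_C, hnormsq]
        ring
      have hqpos : ∀ x, 0 < q.eval x := by
        intro x
        rw [hqeval]
        have : (0:ℝ) < z.im ^ 2 := pow_two_pos_of_ne_zero him
        nlinarith [sq_nonneg (x - z.re)]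
      have hQne : Q ≠ 0 := by
        intro h0; rw [h0, mul_zero] at hPQ; exact hPne hPQ
      have hqne : q ≠ 0 := fun h0 => by simpa [h0] using hqpos 0
      have hqdeg : q.natDegree = 2 := by
        rw [hqdef]; compute_degree!
      have hndeg : Q.natDegree = n - 2 ∧ 2 ≤ n := by
        have := Polynomial.natDegree_mul hqne hQne
        rw [← hPQ, hn, hqdeg] at this
        omega
      have hQnn : ∀ x, 0 ≤ Q.eval x := by
        intro x
        have hPx := h x
        rw [hPQ, Polynomial.eval_mul] at hPx
        exact (mul_nonneg_iff_of_pos_left (hqpos x)).mp hPx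
      obtain ⟨A, B, hAB⟩ := ih (n - 2) (by omega) Q hQnn hndeg.1
      have hqsos : q = (X - C z.re) ^ 2 + (C z.im) ^ 2 := by
        rw [hqdef, hnormsq]
        have h1 : (C (z.re ^ 2 + z.im ^ 2) : Polynomial ℝ) = C z.re ^ 2 + C z.im ^ 2 := by
          rw [map_add, ← C_pow, ← C_pow]
        have h2 : (C (2 * z.re) : Polynomial ℝ) = 2 * C z.re := by
          rw [map_mul, map_ofNat]
        rw [h1, h2]; ring
      exact ⟨(X - C z.re) * A - C z.im * B, (X - C z.re) * B + C z.im * A, by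
        rw [hPQ, hAB, hqsos]; ring⟩

noncomputable def Lmom (s : ℕ → ℝ) : Polynomial ℝ →ₗ[ℝ] ℝ :=
  Polynomial.lsum (fun n => LinearMap.toSpanSingleton ℝ ℝ (s n))

lemma Lmom_monomial (s : ℕ → ℝ) (n : ℕ) (a : ℝ) : Lmom s (monomial n a) = a * s n := by
  rw [Lmom, Polynomial.lsum_apply, Polynomial.sum_monomial_index]
  · simp [LinearMap.toSpanSingleton_apply, smul_eq_mul]
  · simp

lemma Lmom_range (s : ℕ → ℝ) (P : Polynomial ℝ) :
    ∑ k ∈ Finset.range (P.natDegree + 1), P.coeff k * s k = Lmom s P := by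
  rw [Lmom, Polynomial.lsum_apply,
    P.sum_over_range' (fun n => by simp) _ (Nat.lt_succ_self _)]
  simp [LinearMap.toSpanSingleton_apply, smul_eq_mul]

lemma Lmom_sq (s : ℕ → ℝ) (m : ℕ) (f : Fin (m + 1) → ℝ) :
    Lmom s ((∑ i, monomial i.val (f i)) ^ 2) = ∑ i, ∑ j, s (i.val + j.val) * f i * f j := by
  rw [sq, Finset.sum_mul_sum]
  rw [map_sum]
  refine Finset.sum_congr rfl fun i _ => ?_
  rw [map_sum]
  refine Finset.sum_congr rfl fun j _ => ?_
  rw [Polynomial.monomial_mul_monomial, Lmom_monomial]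
  ring

private theorem stmt_3_aux (s : ℕ → ℝ) :
    (∀ P : Polynomial ℝ, (∀ x : ℝ, 0 ≤ P.eval x) →
      0 ≤ ∑ k ∈ Finset.range (P.natDegree + 1), P.coeff k * s k)
    ↔ (∀ m : ℕ, ∀ ξ : Fin (m + 1) → ℝ,
      0 ≤ ∑ i, ∑ j, s (i.val + j.val) * ξ i * ξ j) := by
  constructor
  · intro hL m ξ
    set Q : Polynomial ℝ := ∑ i, monomial i.val (ξ i) with hQ
    have h1 := hL (Q ^ 2) (fun x => by rw [Polynomial.eval_pow]; exact sq_nonneg _)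
    rw [Lmom_range, hQ, Lmom_sq] at h1
    exact h1
  · intro hH P hP
    obtain ⟨A, B, hAB⟩ := sos_of_nonneg P hP
    rw [Lmom_range, hAB, map_add]
    have key : ∀ C : Polynomial ℝ, 0 ≤ Lmom s (C ^ 2) := by
      intro C
      have hC : C = ∑ i : Fin (C.natDegree + 1), monomial i.val (C.coeff i.val) := by
        rw [Fin.sum_univ_eq_sum_range (fun i => monomial i (C.coeff i))]
        exact C.as_sum_range' _ (Nat.lt_succ_self _)
      have h2 := hH C.natDegree (fun i => C.coeff i.val)
      rw [← Lmom_sq s C.natDegree (fun i => C.coeff i.val)] at h2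
      rw [← hC] at h2
      exact h2
    exact add_nonneg (key A) (key B)

end Aux

/-- A real sequence `(s_k)` is positive (in the sense that `∑ a_k s_k ≥ 0` for
every polynomial `∑ a_k x^k` nonnegative on `ℝ`) if and only if all the Hankel
quadratic forms `∑_{i,j=0}^m s_{i+j} ξ_i ξ_j` are positive semidefinite. -/
theorem stmt_3 (s : ℕ → ℝ) :
    (∀ P : Polynomial ℝ, (∀ x : ℝ, 0 ≤ P.eval x) →
      0 ≤ ∑ k ∈ Finset.range (P.natDegree + 1), P.coeff k * s k)
    ↔ (∀ m : ℕ, ∀ ξ : Fin (m + 1) → ℝ,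
      0 ≤ ∑ i, ∑ j, s (i.val + j.val) * ξ i * ξ j) := by
  exact stmt_3_aux s
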